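/- arXiv:q-alg/9705019 — 2 statements merged into one kernel-verified Lean document; each statement's English description precedes it below -/
import Mathlib

section
/- For nonzero complex numbers q, s and any λ, μ, ν ∈ ℂ, the 4×4 matrices R^{λ,μ} := diag-block matrix with entries R₁₁ = q^{1-λ+μ}, R₂₂ = q^{λ+μ}, R₂₃ = (q - q⁻¹) s^{-λ+μ}, R₃₃ = q^{-λ-μ}, R₄₄ = q^{1+λ-μ} (all other entries zero, where indices refer to the ordered basis e₁⊗e₁, e₁⊗e₂, e₂⊗e₁, e₂⊗e₂ of ℂ²⊗ℂ²) satisfy the coloured Yang-Baxter equation R^{λ,μ}₁₂ R^{λ,ν}₁₃ R^{μ,ν}₂₃ = R^{μ,ν}₂₃ R^{λ,ν}₁₃ R^{λ,μ}₁₂ as 8×8 matrices acting on ℂ²⊗ℂ²⊗ℂ². -/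
open Complex Matrix

section Embeddings

variable {I : Type*} [DecidableEq I]

/-- Action of a matrix on factors 1 and 2 of a triple tensor product. -/
def m12 (R : Matrix (I × I) (I × I) ℂ) : Matrix (I × I × I) (I × I × I) ℂ :=
  fun p q => R (p.1, p.2.1) (q.1, q.2.1) * (if p.2.2 = q.2.2 then 1 else 0)

/-- Action of a matrix on factors 1 and 3 of a triple tensor product. -/
def m13 (R : Matrix (I × I) (I × I) ℂ) : Matrix (I × I × I) (I × I × I) ℂ :=
  fun p q => R (p.1, p.2.2) (q.1, q.2.2) * (if p.2.1 = q.2.1 then 1 else 0)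

/-- Action of a matrix on factors 2 and 3 of a triple tensor product. -/
def m23 (R : Matrix (I × I) (I × I) ℂ) : Matrix (I × I × I) (I × I × I) ℂ :=
  fun p q => (if p.1 = q.1 then 1 else 0) * R (p.2.1, p.2.2) (q.2.1, q.2.2)

end Embeddings

/-- The coloured `R`-matrix of `U_{q,s}(gl(2))` in the two-dimensional representation,
with `q = exp h`, `s = exp g` (complex powers taken via the exponential), acting on
`ℂ² ⊗ ℂ²` in the ordered basis `e₁⊗e₁, e₁⊗e₂, e₂⊗e₁, e₂⊗e₂`. -/
noncomputable def Rgl2 (h g l m : ℂ) : Matrix (Fin 2 × Fin 2) (Fin 2 × Fin 2) ℂ :=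
  fun p q =>
    if p = (0, 0) ∧ q = (0, 0) then Complex.exp ((1 - l + m) * h)
    else if p = (0, 1) ∧ q = (0, 1) then Complex.exp ((l + m) * h)
    else if p = (0, 1) ∧ q = (1, 0) then
      (Complex.exp h - Complex.exp (-h)) * Complex.exp ((-l + m) * g)
    else if p = (1, 0) ∧ q = (1, 0) then Complex.exp ((-l - m) * h)
    else if p = (1, 1) ∧ q = (1, 1) then Complex.exp ((1 + l - m) * h)
    else 0

set_option maxHeartbeats 2000000 in
/-- the coloured `R`-matrix of `U_{q,s}(gl(2))` satisfies the coloured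
Yang–Baxter equation `R^{λ,μ}₁₂ R^{λ,ν}₁₃ R^{μ,ν}₂₃ = R^{μ,ν}₂₃ R^{λ,ν}₁₃ R^{λ,μ}₁₂`
on `ℂ² ⊗ ℂ² ⊗ ℂ²`. -/
theorem gl2_coloured_yang_baxter (h g l m n : ℂ) :
    m12 (Rgl2 h g l m) * m13 (Rgl2 h g l n) * m23 (Rgl2 h g m n)
      = m23 (Rgl2 h g m n) * m13 (Rgl2 h g l n) * m12 (Rgl2 h g l m) := by
  ext ⟨a, b, c⟩ ⟨d, e, f⟩
  simp only [Matrix.mul_apply, m12, m13, m23, Fintype.sum_prod_type, Fin.sum_univ_two]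
  fin_cases a <;> fin_cases b <;> fin_cases c <;> fin_cases d <;> fin_cases e <;> fin_cases f <;>
    simp [Rgl2, Prod.ext_iff, ← Complex.exp_add] <;> ring_nf <;>
    simp [pow_two, ← Complex.exp_add] <;> ring_nf
end

section
/- For any nonzero complex z and colour parameters λ = (λ₊, λ₋), μ = (μ₊, μ₋) ∈ (ℂ\{0})², the 9×9 matrix R^{λ,μ} = I₉ + 2λ₋μ₊ z (A₋ ⊗ A₊) − λ₊λ₋ z (M ⊗ N) − μ₊μ₋ z (N ⊗ M), where N = E₂₂, M = E₁₃, A₊ = E₂₃, A₋ = E₁₂ are 3×3 elementary matrices, satisfies the coloured Yang-Baxter equation R^{λ,μ}₁₂ R^{λ,ν}₁₃ R^{μ,ν}₂₃ = R^{μ,ν}₂₃ R^{λ,ν}₁₃ R^{λ,μ}₁₂ on ℂ³⊗ℂ³⊗ℂ³. -/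
open Complex Matrix Kronecker

/-- `D(N) = E₂₂` in the 3-dimensional representation of the oscillator algebra. -/
def oscN : Matrix (Fin 3) (Fin 3) ℂ := Matrix.single 1 1 1
/-- `D(M) = E₁₃`. -/
def oscM : Matrix (Fin 3) (Fin 3) ℂ := Matrix.single 0 2 1
/-- `D(A₊) = E₂₃`. -/
def oscAp : Matrix (Fin 3) (Fin 3) ℂ := Matrix.single 1 2 1
/-- `D(A₋) = E₁₂`. -/
def oscAm : Matrix (Fin 3) (Fin 3) ℂ := Matrix.single 0 1 1

/-- The coloured `R`-matrix of `U_z(h(4))` in the 3-dimensional representation: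
`R^{λ,μ} = I₉ + 2λ₋μ₊z (A₋ ⊗ A₊) − λ₊λ₋z (M ⊗ N) − μ₊μ₋z (N ⊗ M)`. -/
noncomputable def Rosc (z lp lm mp mm : ℂ) :
    Matrix (Fin 3 × Fin 3) (Fin 3 × Fin 3) ℂ :=
  1 + (2 * lm * mp * z) • (oscAm ⊗ₖ oscAp)
    - (lp * lm * z) • (oscM ⊗ₖ oscN) - (mp * mm * z) • (oscN ⊗ₖ oscM)


section Aux

variable {I : Type*} [DecidableEq I] [Fintype I]

/-- Triple Kronecker embedding. -/
def k3 (A B C : Matrix I I ℂ) : Matrix (I × I × I) (I × I × I) ℂ :=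
  A ⊗ₖ (B ⊗ₖ C)

lemma k3_mul (A B C D E F : Matrix I I ℂ) :
    k3 A B C * k3 D E F = k3 (A * D) (B * E) (C * F) := by
  simp [k3, Matrix.mul_kronecker_mul]

lemma k3_zero₁ (B C : Matrix I I ℂ) : k3 0 B C = 0 := by
  simp [k3, Matrix.zero_kronecker]
lemma k3_zero₂ (A C : Matrix I I ℂ) : k3 A 0 C = 0 := by
  simp [k3, Matrix.zero_kronecker, Matrix.kronecker_zero]
lemma k3_zero₃ (A B : Matrix I I ℂ) : k3 A B 0 = 0 := by
  simp [k3, Matrix.kronecker_zero]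

end Aux

lemma m12_Rosc (z lp lm mp mm : ℂ) :
    m12 (Rosc z lp lm mp mm) =
      1 + (2 * lm * mp * z) • k3 oscAm oscAp 1 - (lp * lm * z) • k3 oscM oscN 1
        - (mp * mm * z) • k3 oscN oscM 1 := by
  ext ⟨a,b,c⟩ ⟨d,e,f⟩
  simp only [m12, Rosc, k3, Matrix.sub_apply, Matrix.add_apply, Matrix.smul_apply,
    Matrix.kroneckerMap_apply, Matrix.one_apply, Prod.ext_iff, smul_eq_mul]
  split_ifs <;> simp_all

lemma m13_Rosc (z lp lm mp mm : ℂ) :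
    m13 (Rosc z lp lm mp mm) =
      1 + (2 * lm * mp * z) • k3 oscAm 1 oscAp - (lp * lm * z) • k3 oscM 1 oscN
        - (mp * mm * z) • k3 oscN 1 oscM := by
  ext ⟨a,b,c⟩ ⟨d,e,f⟩
  simp only [m13, Rosc, k3, Matrix.sub_apply, Matrix.add_apply, Matrix.smul_apply,
    Matrix.kroneckerMap_apply, Matrix.one_apply, Prod.ext_iff, smul_eq_mul]
  split_ifs <;> simp_all

lemma m23_Rosc (z lp lm mp mm : ℂ) :
    m23 (Rosc z lp lm mp mm) =
      1 + (2 * lm * mp * z) • k3 1 oscAm oscAp - (lp * lm * z) • k3 1 oscM oscN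
        - (mp * mm * z) • k3 1 oscN oscM := by
  ext ⟨a,b,c⟩ ⟨d,e,f⟩
  simp only [m23, Rosc, k3, Matrix.sub_apply, Matrix.add_apply, Matrix.smul_apply,
    Matrix.kroneckerMap_apply, Matrix.one_apply, Prod.ext_iff, smul_eq_mul]
  split_ifs <;> simp_all

lemma pAmAm : oscAm * oscAm = 0 := by simp [oscAm, oscAp, oscM, oscN]
lemma pAmAp : oscAm * oscAp = oscM := by simp [oscAm, oscAp, oscM, oscN]
lemma pAmM : oscAm * oscM = 0 := by simp [oscAm, oscAp, oscM, oscN]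
lemma pAmN : oscAm * oscN = oscAm := by simp [oscAm, oscAp, oscM, oscN]
lemma pApAm : oscAp * oscAm = 0 := by simp [oscAm, oscAp, oscM, oscN]
lemma pApAp : oscAp * oscAp = 0 := by simp [oscAm, oscAp, oscM, oscN]
lemma pApM : oscAp * oscM = 0 := by simp [oscAm, oscAp, oscM, oscN]
lemma pApN : oscAp * oscN = 0 := by simp [oscAm, oscAp, oscM, oscN]
lemma pMAm : oscM * oscAm = 0 := by simp [oscAm, oscAp, oscM, oscN]
lemma pMAp : oscM * oscAp = 0 := by simp [oscAm, oscAp, oscM, oscN]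
lemma pMM : oscM * oscM = 0 := by simp [oscAm, oscAp, oscM, oscN]
lemma pMN : oscM * oscN = 0 := by simp [oscAm, oscAp, oscM, oscN]
lemma pNAm : oscN * oscAm = 0 := by simp [oscAm, oscAp, oscM, oscN]
lemma pNAp : oscN * oscAp = oscAp := by simp [oscAm, oscAp, oscM, oscN]
lemma pNM : oscN * oscM = 0 := by simp [oscAm, oscAp, oscM, oscN]
lemma pNN : oscN * oscN = oscN := by simp [oscAm, oscAp, oscM, oscN]

/-- the coloured `R`-matrix of the standard quantum oscillator algebra
satisfies the coloured Yang–Baxter equation on `ℂ³ ⊗ ℂ³ ⊗ ℂ³`. -/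
theorem oscillator_coloured_yang_baxter
    (z : ℂ) (hz : z ≠ 0) (lp lm mp mm np nm : ℂ)
    (hlp : lp ≠ 0) (hlm : lm ≠ 0) (hmp : mp ≠ 0) (hmm : mm ≠ 0)
    (hnp : np ≠ 0) (hnm : nm ≠ 0) :
    m12 (Rosc z lp lm mp mm) * m13 (Rosc z lp lm np nm) * m23 (Rosc z mp mm np nm)
      = m23 (Rosc z mp mm np nm) * m13 (Rosc z lp lm np nm) *
        m12 (Rosc z lp lm mp mm) := by
  rw [m12_Rosc, m13_Rosc, m23_Rosc]
  simp only [mul_add, add_mul, mul_sub, sub_mul, one_mul, mul_one,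
    Matrix.smul_mul, Matrix.mul_smul, k3_mul, pAmAm, pAmAp, pAmM, pAmN, pApAm,
    pApAp, pApM, pApN, pMAm, pMAp, pMM, pMN, pNAm, pNAp, pNM, pNN,
    k3_zero₁, k3_zero₂, k3_zero₃, smul_zero, zero_smul, smul_smul, zero_mul, mul_zero,
    add_zero, zero_add, sub_zero, zero_sub, neg_zero, neg_neg,
    Matrix.one_mul, Matrix.mul_one]
  module
end
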